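/- arXiv:1808.05711 — 4 statements merged into one kernel-verified Lean document; each statement's English description precedes it below -/
import Mathlib

section
/- Define F : ℝ × ℝ → ℂ by F(x,t) = e^x·(tanh t + i·sech t). Then: (1) Im F(x,t) = e^x·sech t > 0, so F takes values in the upper half plane, and |F(x,t)| = e^x; (2) F is differentiable with partial derivatives ∂F/∂x (x,t) = F(x,t) and ∂F/∂t (x,t) = e^x·sech t·(sech t − i·tanh t); (3) for all real u, v one has |u·∂F/∂x(x,t) + v·∂F/∂t(x,t)|² = (Im F(x,t))²·(cosh²(t)·u² + v²); and consequently (4) (1/2)·(cosh(2t)·u² + v²) ≤ |u·∂F/∂x + v·∂F/∂t|² / (Im F(x,t))² ≤ cosh(2t)·u² + v², i.e. the pullback of the hyperbolic metric |dz|²/(Im z)² under F lies between half of and all of the ladder metric cosh(2t)dx² + dt², so F is pointwise √2-bi-Lipschitz between them. -/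
open Real Complex

/-- The strip parametrization `F(x,t) = eˣ·(tanh t + i·sech t)` of the paper's ladders. -/
noncomputable def stripMap (x t : ℝ) : ℂ :=
  (Real.exp x : ℂ) * ((Real.tanh t : ℂ) + ((Real.cosh t)⁻¹ : ℝ) * Complex.I)

/-- The `t`-partial derivative of the strip map:
`∂F/∂t = eˣ·sech t·(sech t − i·tanh t)`. -/
noncomputable def stripMapDt (x t : ℝ) : ℂ :=
  (Real.exp x : ℂ) * ((Real.cosh t)⁻¹ : ℝ) *
    (((Real.cosh t)⁻¹ : ℝ) - (Real.tanh t : ℝ) * Complex.I)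

lemma aux_im (x t : ℝ) : (stripMap x t).im = Real.exp x * (Real.cosh t)⁻¹ := by
  simp only [stripMap, Complex.mul_im, Complex.add_im, Complex.add_re, Complex.ofReal_re,
    Complex.ofReal_im, Complex.mul_I_im, Complex.mul_I_re, Complex.I_re, Complex.I_im]
  ring

lemma aux_re (x t : ℝ) : (stripMap x t).re = Real.exp x * Real.tanh t := by
  simp only [stripMap, Complex.mul_re, Complex.add_im, Complex.add_re, Complex.ofReal_re,
    Complex.ofReal_im, Complex.mul_I_im, Complex.mul_I_re, Complex.I_re, Complex.I_im]
  ring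

lemma dt_re (x t : ℝ) : (stripMapDt x t).re = Real.exp x * (Real.cosh t)⁻¹ * (Real.cosh t)⁻¹ := by
  simp only [stripMapDt, Complex.mul_re, Complex.mul_im, Complex.sub_re, Complex.sub_im,
    Complex.ofReal_re, Complex.ofReal_im, Complex.mul_I_im, Complex.mul_I_re, Complex.I_re, Complex.I_im]
  ring

lemma dt_im (x t : ℝ) : (stripMapDt x t).im = -(Real.exp x * (Real.cosh t)⁻¹ * Real.tanh t) := by
  simp only [stripMapDt, Complex.mul_re, Complex.mul_im, Complex.sub_re, Complex.sub_im,
    Complex.ofReal_re, Complex.ofReal_im, Complex.mul_I_im, Complex.mul_I_re, Complex.I_re, Complex.I_im]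
  ring

lemma aux_derivt (x t : ℝ) :
    HasDerivAt (fun s : ℝ => stripMap x s) (stripMapDt x t) t := by
  have hc : ∀ s : ℝ, Real.cosh s ≠ 0 := fun s => (Real.cosh_pos s).ne'
  have h1 : HasDerivAt (fun s : ℝ => Real.sinh s / Real.cosh s)
      ((Real.cosh t * Real.cosh t - Real.sinh t * Real.sinh t) / Real.cosh t ^ 2) t :=
    (Real.hasDerivAt_sinh t).div (Real.hasDerivAt_cosh t) (hc t)
  have h2 : HasDerivAt (fun s : ℝ => (Real.cosh s)⁻¹)
      (-Real.sinh t / Real.cosh t ^ 2) t := by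
    exact (Real.hasDerivAt_cosh t).inv (hc t)
  have h3 : HasDerivAt (fun s : ℝ =>
      ((Real.sinh s / Real.cosh s : ℝ) : ℂ) + ((Real.cosh s)⁻¹ : ℝ) * Complex.I)
      ((((Real.cosh t * Real.cosh t - Real.sinh t * Real.sinh t) / Real.cosh t ^ 2 : ℝ)) +
        ((-Real.sinh t / Real.cosh t ^ 2 : ℝ)) * Complex.I) t :=
    h1.ofReal_comp.add (h2.ofReal_comp.mul_const Complex.I)
  have h4 := (h3.const_mul ((Real.exp x : ℂ)))
  have heq : (fun s : ℝ => stripMap x s) = fun s : ℝ =>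
      (Real.exp x : ℂ) * (((Real.sinh s / Real.cosh s : ℝ) : ℂ) + ((Real.cosh s)⁻¹ : ℝ) * Complex.I) := by
    funext s
    simp [stripMap, Real.tanh_eq_sinh_div_cosh]
  rw [heq]
  refine h4.congr_deriv ?_; symm
  have hpyth := Real.cosh_sq_sub_sinh_sq t
  apply Complex.ext
  · simp only [dt_re, Complex.mul_re, Complex.add_re, Complex.add_im, Complex.ofReal_re,
      Complex.ofReal_im, Complex.mul_I_im, Complex.mul_I_re, Complex.I_re, Complex.I_im]
    field_simp
    linear_combination (-(Real.exp x)) * hpyth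
  · simp only [dt_im, Complex.mul_im, Complex.add_re, Complex.add_im, Complex.ofReal_re,
      Complex.ofReal_im, Complex.mul_I_im, Complex.mul_I_re, Real.tanh_eq_sinh_div_cosh]
    field_simp
    simp only [Complex.I_re, Complex.I_im]; ring

lemma aux_sq (x t : ℝ) (u v : ℝ) :
    ‖(u : ℂ) * stripMap x t + (v : ℂ) * stripMapDt x t‖ ^ 2 =
      ((stripMap x t).im) ^ 2 * ((Real.cosh t) ^ 2 * u ^ 2 + v ^ 2) := by
  have hc : Real.cosh t ≠ 0 := (Real.cosh_pos t).ne'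
  have hpyth := Real.cosh_sq_sub_sinh_sq t
  rw [Complex.sq_norm, Complex.normSq_apply]
  simp only [Complex.add_re, Complex.add_im, Complex.mul_re, Complex.mul_im,
    Complex.ofReal_re, Complex.ofReal_im, aux_re, aux_im, dt_re, dt_im,
    Real.tanh_eq_sinh_div_cosh]
  field_simp
  linear_combination (-(Real.cosh t^2*u^2 + v^2)) * hpyth

lemma aux_abs (x t : ℝ) : ‖stripMap x t‖ = Real.exp x := by
  have hc : Real.cosh t ≠ 0 := (Real.cosh_pos t).ne'
  have hpyth := Real.cosh_sq_sub_sinh_sq t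
  have hsq : ‖stripMap x t‖ ^ 2 = Real.exp x ^ 2 := by
    rw [Complex.sq_norm, Complex.normSq_apply, aux_re, aux_im, Real.tanh_eq_sinh_div_cosh]
    field_simp
    linear_combination (-1 : ℝ) * hpyth
  have h1 := norm_nonneg (stripMap x t)
  nlinarith [Real.exp_pos x]

/-- `F(x,t) = eˣ·(tanh t + i·sech t)` takes values in the upper half plane with
`Im F = eˣ·sech t` and `|F| = eˣ`; its partial derivatives are `∂F/∂x = F` and
`∂F/∂t = eˣ·sech t·(sech t − i·tanh t)`; the pullback of the hyperbolic metric satisfies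
`|u·∂F/∂x + v·∂F/∂t|² = (Im F)²·(cosh²t·u² + v²)`, so it lies between half of and all of
the ladder metric `cosh(2t)dx² + dt²`, i.e. `F` is pointwise `√2`-bi-Lipschitz. -/
theorem stripMap_properties (x t : ℝ) :
    ((stripMap x t).im = Real.exp x * (Real.cosh t)⁻¹ ∧ 0 < (stripMap x t).im ∧
      ‖stripMap x t‖ = Real.exp x) ∧
    HasDerivAt (fun y : ℝ => stripMap y t) (stripMap x t) x ∧
    HasDerivAt (fun s : ℝ => stripMap x s) (stripMapDt x t) t ∧
    (∀ u v : ℝ,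
      ‖(u : ℂ) * stripMap x t + (v : ℂ) * stripMapDt x t‖ ^ 2 =
        ((stripMap x t).im) ^ 2 * ((Real.cosh t) ^ 2 * u ^ 2 + v ^ 2)) ∧
    (∀ u v : ℝ,
      (1 / 2) * (Real.cosh (2 * t) * u ^ 2 + v ^ 2) ≤
        ‖(u : ℂ) * stripMap x t + (v : ℂ) * stripMapDt x t‖ ^ 2 /
          ((stripMap x t).im) ^ 2 ∧
      ‖(u : ℂ) * stripMap x t + (v : ℂ) * stripMapDt x t‖ ^ 2 /
          ((stripMap x t).im) ^ 2 ≤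
        Real.cosh (2 * t) * u ^ 2 + v ^ 2) := by
  have him := aux_im x t
  have hpos : 0 < (stripMap x t).im := by
    rw [him]; positivity
  refine ⟨⟨him, hpos, aux_abs x t⟩, ?_, aux_derivt x t, aux_sq x t, ?_⟩
  · have h := ((Real.hasDerivAt_exp x).ofReal_comp).mul_const
      ((Real.tanh t : ℂ) + ((Real.cosh t)⁻¹ : ℝ) * Complex.I)
    exact h
  · intro u v
    have him2 : ((stripMap x t).im) ^ 2 ≠ 0 := by positivity
    have hratio : ‖(u : ℂ) * stripMap x t + (v : ℂ) * stripMapDt x t‖ ^ 2 /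
        ((stripMap x t).im) ^ 2 = (Real.cosh t) ^ 2 * u ^ 2 + v ^ 2 := by
      rw [aux_sq x t u v, mul_div_assoc]
      field_simp
    rw [hratio, Real.cosh_two_mul]
    have h1 := Real.cosh_sq_sub_sinh_sq t
    have h2 := sq_nonneg (Real.sinh t)
    constructor <;> nlinarith [sq_nonneg u, sq_nonneg v]
end

section
/- There exists a constant N > 0 such that the following holds for every real ℓ ≥ 1. Let a, b ∈ 𝕌 with |a| = 1 and |b| = e^ℓ. Let γ : [0, dist(a,b)] → 𝕌 be any isometric embedding with γ(0) = a and γ(dist(a,b)) = b, let γ₁ : [0, dist(a,i)] → 𝕌 be any isometric embedding with endpoints a and i, and let γ₂ : [0, dist(i·e^ℓ, b)] → 𝕌 be any isometric embedding with endpoints i·e^ℓ and b. Then the Hausdorff distance (with respect to the hyperbolic metric) between the image of γ and the set im(γ₁) ∪ {i·y : 1 ≤ y ≤ e^ℓ} ∪ im(γ₂) is at most N. -/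
open UpperHalfPlane

noncomputable section

noncomputable def sfun (x y : ℍ) : ℝ :=
  dist (x : ℂ) (y : ℂ) / (Real.sqrt x.im * Real.sqrt y.im)

noncomputable def Tf (x y : ℍ) : ℝ := sfun x y + 1

lemma sqrt_im_pos (x : ℍ) : 0 < Real.sqrt x.im := Real.sqrt_pos.2 x.im_pos

lemma sfun_nonneg (x y : ℍ) : 0 ≤ sfun x y :=
  div_nonneg dist_nonneg (by positivity)

lemma one_le_Tf (x y : ℍ) : 1 ≤ Tf x y := by
  have := sfun_nonneg x y; unfold Tf; linarith

lemma sfun_symm (x y : ℍ) : sfun x y = sfun y x := by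
  unfold sfun; rw [dist_comm, mul_comm]

lemma Tf_symm (x y : ℍ) : Tf x y = Tf y x := by unfold Tf; rw [sfun_symm]

lemma sfun_mul (x y : ℍ) :
    sfun x y * (Real.sqrt x.im * Real.sqrt y.im) = dist (x : ℂ) (y : ℂ) := by
  unfold sfun
  field_simp

lemma half_dist_arsinh (x y : ℍ) : dist x y / 2 = Real.arsinh (sfun x y / 2) := by
  rw [UpperHalfPlane.dist_eq]
  rw [mul_div_cancel_left₀ _ (two_ne_zero)]
  congr 1
  rw [Real.sqrt_mul x.im_pos.le]
  unfold sfun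
  ring

lemma exp_half_le_Tf (x y : ℍ) : Real.exp (dist x y / 2) ≤ Tf x y := by
  rw [half_dist_arsinh, Real.exp_arsinh]
  have h1 : Real.sqrt (1 + (sfun x y / 2) ^ 2) ≤ 1 + sfun x y / 2 := by
    rw [show (1:ℝ) + sfun x y / 2 = Real.sqrt ((1 + sfun x y / 2)^2) by
      rw [Real.sqrt_sq (by have := sfun_nonneg x y; linarith)]]
    apply Real.sqrt_le_sqrt
    have := sfun_nonneg x y
    nlinarith
  unfold Tf
  linarith

lemma Tf_le_two_exp_half (x y : ℍ) : Tf x y ≤ 2 * Real.exp (dist x y / 2) := by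
  rw [half_dist_arsinh, Real.exp_arsinh]
  have h1 : (1:ℝ) ≤ Real.sqrt (1 + (sfun x y / 2) ^ 2) := by
    have h2 : Real.sqrt 1 ≤ Real.sqrt (1 + (sfun x y / 2) ^ 2) :=
      Real.sqrt_le_sqrt (by nlinarith)
    rwa [Real.sqrt_one] at h2
  unfold Tf
  nlinarith [Real.sqrt_nonneg (1 + (sfun x y / 2)^2)]

lemma sqrt_ratio_le (x z : ℍ) : Real.sqrt z.im ≤ Tf x z * Real.sqrt x.im := by
  have hx := sqrt_im_pos x
  have hz := sqrt_im_pos z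
  have hx2 : Real.sqrt x.im ^ 2 = x.im := Real.sq_sqrt x.im_pos.le
  have hz2 : Real.sqrt z.im ^ 2 = z.im := Real.sq_sqrt z.im_pos.le
  rcases le_or_gt (Real.sqrt z.im) (Real.sqrt x.im) with h | h
  · have := one_le_Tf x z
    nlinarith
  · have him : z.im - x.im ≤ dist (x : ℂ) (z : ℂ) := by
      have h1 : |((x : ℂ) - z).im| ≤ ‖(x:ℂ) - z‖ := Complex.abs_im_le_norm _
      rw [Complex.dist_eq]
      have : ((x:ℂ) - z).im = x.im - z.im := by
        simp [Complex.sub_im, UpperHalfPlane.coe_im]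
      rw [this] at h1
      calc z.im - x.im ≤ |x.im - z.im| := by rw [abs_sub_comm]; exact le_abs_self _
        _ ≤ _ := h1
    have hmul := sfun_mul x z
    have : z.im - x.im ≤ sfun x z * (Real.sqrt x.im * Real.sqrt z.im) := by
      rw [hmul]; exact him
    unfold Tf
    nlinarith

lemma sfun_le_two_Tf (x y z : ℍ) : sfun x y ≤ 2 * (Tf x z * Tf y z) := by
  have hx := sqrt_im_pos x
  have hy := sqrt_im_pos y
  have hz := sqrt_im_pos z
  have htri : dist (x : ℂ) (y : ℂ) ≤ dist (x : ℂ) (z : ℂ) + dist (z : ℂ) (y : ℂ) :=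
    dist_triangle _ _ _
  have h1 := sfun_mul x z
  have h2 := sfun_mul z y
  have h3 := sfun_mul x y
  have r1 : Real.sqrt z.im ≤ Tf y z * Real.sqrt y.im := sqrt_ratio_le y z
  have r2 : Real.sqrt z.im ≤ Tf x z * Real.sqrt x.im := sqrt_ratio_le x z
  have s1 : sfun x z ≤ Tf x z := by unfold Tf; linarith [sfun_nonneg x z]
  have s2 : sfun z y ≤ Tf y z := by
    rw [sfun_symm]; unfold Tf; linarith [sfun_nonneg y z]
  have q1 : sfun x z * Real.sqrt z.im ≤ Tf x z * (Tf y z * Real.sqrt y.im) :=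
    mul_le_mul s1 r1 (Real.sqrt_nonneg _) (le_trans (sfun_nonneg x z) s1)
  have q2 : sfun z y * Real.sqrt z.im ≤ Tf y z * (Tf x z * Real.sqrt x.im) :=
    mul_le_mul s2 r2 (Real.sqrt_nonneg _) (le_trans (sfun_nonneg z y) s2)
  have key : sfun x y * (Real.sqrt x.im * Real.sqrt y.im) ≤
      2 * (Tf x z * Tf y z) * (Real.sqrt x.im * Real.sqrt y.im) := by
    rw [h3]
    have e1 : dist (x : ℂ) (z : ℂ) ≤ Tf x z * (Real.sqrt x.im * (Tf y z * Real.sqrt y.im)) := by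
      rw [← h1]
      nlinarith [mul_le_mul_of_nonneg_left q1 hx.le]
    have e2 : dist (z : ℂ) (y : ℂ) ≤ Tf y z * ((Tf x z * Real.sqrt x.im) * Real.sqrt y.im) := by
      rw [← h2]
      nlinarith [mul_le_mul_of_nonneg_left q2 hy.le]
    nlinarith
  have hD : (0:ℝ) < Real.sqrt x.im * Real.sqrt y.im := by positivity
  exact le_of_mul_le_mul_right key hD

lemma ptolemy (x y z w : ℂ) :
    ‖x - y‖ * ‖z - w‖ ≤
      ‖x - z‖ * ‖y - w‖ +
        ‖x - w‖ * ‖y - z‖ := by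
  have hid : (x - y) * (z - w) = (x - z) * (y - w) + (x - w) * (z - y) := by ring
  calc ‖x - y‖ * ‖z - w‖
      = ‖(x - y) * (z - w)‖ := (norm_mul _ _).symm
    _ = ‖(x - z) * (y - w) + (x - w) * (z - y)‖ := by rw [hid]
    _ ≤ ‖(x - z) * (y - w)‖ + ‖(x - w) * (z - y)‖ :=
        norm_add_le _ _
    _ = ‖x - z‖ * ‖y - w‖ +
          ‖x - w‖ * ‖y - z‖ := by
        rw [norm_mul, norm_mul, norm_sub_rev z y]

lemma sfun_ptolemy (x y z w : ℍ) :
    sfun x y * sfun z w ≤ sfun x z * sfun y w + sfun x w * sfun y z := by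
  have hx := sqrt_im_pos x
  have hy := sqrt_im_pos y
  have hz := sqrt_im_pos z
  have hw := sqrt_im_pos w
  have hp := ptolemy (x : ℂ) (y : ℂ) (z : ℂ) (w : ℂ)
  simp only [← Complex.dist_eq] at hp
  have e1 := sfun_mul x y
  have e2 := sfun_mul z w
  have e3 := sfun_mul x z
  have e4 := sfun_mul y w
  have e5 := sfun_mul x w
  have e6 := sfun_mul y z
  have hD : (0:ℝ) < Real.sqrt x.im * Real.sqrt y.im * (Real.sqrt z.im * Real.sqrt w.im) := by
    positivity
  rw [← e1, ← e2, ← e3, ← e4, ← e5, ← e6] at hp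
  have := mul_pos (mul_pos hx hy) (mul_pos hz hw)
  nlinarith [sfun_nonneg x y, sfun_nonneg z w, sfun_nonneg x z, sfun_nonneg y w,
    sfun_nonneg x w, sfun_nonneg y z]

lemma four_point (x y z w : ℍ) :
    dist x y + dist z w ≤
      max (dist x z + dist y w) (dist x w + dist y z) + 2 * Real.log 28 := by
  set R : ℝ := max (dist x z + dist y w) (dist x w + dist y z) with hR
  set M : ℝ := max (Tf x z * Tf y w) (Tf x w * Tf y z) with hM
  have t_nn : ∀ a b : ℍ, (0:ℝ) ≤ Tf a b := fun a b => le_trans zero_le_one (one_le_Tf a b)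
  have hM1 : (1:ℝ) ≤ M := by
    have h1 : (1:ℝ) ≤ Tf x z * Tf y w := by nlinarith [one_le_Tf x z, one_le_Tf y w]
    exact le_trans h1 (le_max_left _ _)
  have hMpos : (0:ℝ) < M := lt_of_lt_of_le one_pos hM1
  have hmx1 : Tf x z * Tf y w ≤ M := le_max_left _ _
  have hmx2 : Tf x w * Tf y z ≤ M := le_max_right _ _
  have hMM : (Tf x z * Tf y w) * (Tf x w * Tf y z) ≤ M * M :=
    mul_le_mul hmx1 hmx2 (mul_nonneg (t_nn x w) (t_nn y z)) hMpos.le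
  have sqrt_trick : ∀ u : ℝ, 0 ≤ u → u * u ≤ (2*M) * (2*M) → u ≤ 2*M := by
    intro u hu hsq
    have h := Real.sqrt_le_sqrt hsq
    rwa [Real.sqrt_mul_self hu, Real.sqrt_mul_self (by linarith)] at h
  have hxy1 : sfun x y ≤ 2 * (Tf x z * Tf y z) := sfun_le_two_Tf x y z
  have hxy2 : sfun x y ≤ 2 * (Tf x w * Tf y w) := sfun_le_two_Tf x y w
  have hzw1 : sfun z w ≤ 2 * (Tf x z * Tf x w) := by
    have h := sfun_le_two_Tf z w x
    rwa [Tf_symm z x, Tf_symm w x] at h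
  have hzw2 : sfun z w ≤ 2 * (Tf y z * Tf y w) := by
    have h := sfun_le_two_Tf z w y
    rwa [Tf_symm z y, Tf_symm w y] at h
  have hsxy : sfun x y ≤ 2 * M := by
    apply sqrt_trick _ (sfun_nonneg x y)
    calc sfun x y * sfun x y ≤ (2 * (Tf x z * Tf y z)) * (2 * (Tf x w * Tf y w)) :=
          mul_le_mul hxy1 hxy2 (sfun_nonneg x y)
            (mul_nonneg (by norm_num) (mul_nonneg (t_nn x z) (t_nn y z)))
      _ = 4 * ((Tf x z * Tf y w) * (Tf x w * Tf y z)) := by ring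
      _ ≤ 4 * (M * M) := by linarith
      _ = (2*M) * (2*M) := by ring
  have hszw : sfun z w ≤ 2 * M := by
    apply sqrt_trick _ (sfun_nonneg z w)
    calc sfun z w * sfun z w ≤ (2 * (Tf x z * Tf x w)) * (2 * (Tf y z * Tf y w)) :=
          mul_le_mul hzw1 hzw2 (sfun_nonneg z w)
            (mul_nonneg (by norm_num) (mul_nonneg (t_nn x z) (t_nn x w)))
      _ = 4 * ((Tf x z * Tf y w) * (Tf x w * Tf y z)) := by ring
      _ ≤ 4 * (M * M) := by linarith
      _ = (2*M) * (2*M) := by ring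
  have hprod : sfun x y * sfun z w ≤ 2 * M := by
    have hp := sfun_ptolemy x y z w
    have b1 : sfun x z * sfun y w ≤ Tf x z * Tf y w := by
      have u1 : sfun x z ≤ Tf x z := by unfold Tf; linarith [sfun_nonneg x z]
      have u2 : sfun y w ≤ Tf y w := by unfold Tf; linarith [sfun_nonneg y w]
      exact mul_le_mul u1 u2 (sfun_nonneg y w) (t_nn x z)
    have b2 : sfun x w * sfun y z ≤ Tf x w * Tf y z := by
      have u1 : sfun x w ≤ Tf x w := by unfold Tf; linarith [sfun_nonneg x w]
      have u2 : sfun y z ≤ Tf y z := by unfold Tf; linarith [sfun_nonneg y z]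
      exact mul_le_mul u1 u2 (sfun_nonneg y z) (t_nn x w)
    linarith
  have hTT : Tf x y * Tf z w ≤ 7 * M := by
    have e : Tf x y * Tf z w = sfun x y * sfun z w + sfun x y + sfun z w + 1 := by
      unfold Tf; ring
    linarith [e.le]
  have hexp1 : Real.exp ((dist x y + dist z w) / 2) ≤ 7 * M := by
    rw [show (dist x y + dist z w) / 2 = dist x y / 2 + dist z w / 2 by ring, Real.exp_add]
    calc Real.exp (dist x y / 2) * Real.exp (dist z w / 2) ≤ Tf x y * Tf z w :=
          mul_le_mul (exp_half_le_Tf x y) (exp_half_le_Tf z w) (Real.exp_pos _).le (t_nn x y)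
      _ ≤ 7 * M := hTT
  have hexp2 : M ≤ 4 * Real.exp (R / 2) := by
    have case1 : Tf x z * Tf y w ≤ 4 * Real.exp (R / 2) := by
      have h1 : Tf x z * Tf y w ≤
          (2 * Real.exp (dist x z / 2)) * (2 * Real.exp (dist y w / 2)) :=
        mul_le_mul (Tf_le_two_exp_half x z) (Tf_le_two_exp_half y w) (t_nn y w) (by positivity)
      have h2 : (2 * Real.exp (dist x z / 2)) * (2 * Real.exp (dist y w / 2)) =
          4 * Real.exp ((dist x z + dist y w) / 2) := by
        rw [show (dist x z + dist y w) / 2 = dist x z / 2 + dist y w / 2 by ring, Real.exp_add]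
        ring
      have hle : dist x z + dist y w ≤ R := by rw [hR]; exact le_max_left _ _
      have h3 : Real.exp ((dist x z + dist y w) / 2) ≤ Real.exp (R / 2) :=
        Real.exp_le_exp.mpr (by linarith)
      linarith [h1, h2.le, h3]
    have case2 : Tf x w * Tf y z ≤ 4 * Real.exp (R / 2) := by
      have h1 : Tf x w * Tf y z ≤
          (2 * Real.exp (dist x w / 2)) * (2 * Real.exp (dist y z / 2)) :=
        mul_le_mul (Tf_le_two_exp_half x w) (Tf_le_two_exp_half y z) (t_nn y z) (by positivity)
      have h2 : (2 * Real.exp (dist x w / 2)) * (2 * Real.exp (dist y z / 2)) =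
          4 * Real.exp ((dist x w + dist y z) / 2) := by
        rw [show (dist x w + dist y z) / 2 = dist x w / 2 + dist y z / 2 by ring, Real.exp_add]
        ring
      have hle : dist x w + dist y z ≤ R := by rw [hR]; exact le_max_right _ _
      have h3 : Real.exp ((dist x w + dist y z) / 2) ≤ Real.exp (R / 2) :=
        Real.exp_le_exp.mpr (by linarith)
      linarith [h1, h2.le, h3]
    exact max_le case1 case2
  have hfinal : Real.exp ((dist x y + dist z w) / 2) ≤ 28 * Real.exp (R / 2) := by
    linarith
  have hlog := Real.log_le_log (Real.exp_pos _) hfinal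
  rw [Real.log_exp, Real.log_mul (by norm_num) (Real.exp_ne_zero _), Real.log_exp] at hlog
  linarith

/-- If `γ` is a geodesic from `a` to `b` and `p` satisfies
`dist a p + dist b p ≤ dist a b + 6`, then some point `γ t` is close to `p`. -/
lemma near_geodesic (a b p : ℍ) (γ : ℝ → ℍ)
    (hiso : ∀ s ∈ Set.Icc (0:ℝ) (dist a b), ∀ u ∈ Set.Icc (0:ℝ) (dist a b),
      dist (γ s) (γ u) = |s - u|)
    (h0 : γ 0 = a) (hd : γ (dist a b) = b)
    (hp : dist a p + dist b p ≤ dist a b + 6) :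
    ∃ t ∈ Set.Icc (0:ℝ) (dist a b), dist p (γ t) ≤ 3 + 2 * Real.log 28 := by
  set d : ℝ := dist a b with hdd
  set t : ℝ := (d + dist a p - dist b p) / 2 with ht
  have htr1 : dist b p ≤ d + dist a p := by
    have := dist_triangle b a p
    rw [dist_comm b a] at this
    linarith
  have htr2 : dist a p ≤ d + dist b p := dist_triangle a b p
  have ht0 : 0 ≤ t := by rw [ht]; linarith
  have htd : t ≤ d := by rw [ht]; linarith
  have hd0 : (0:ℝ) ≤ d := dist_nonneg
  have hmem : t ∈ Set.Icc (0:ℝ) d := ⟨ht0, htd⟩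
  refine ⟨t, hmem, ?_⟩
  have hza : dist (γ t) a = t := by
    rw [← h0, hiso t hmem 0 ⟨le_refl 0, hd0⟩]
    rw [abs_of_nonneg (by linarith)]; ring
  have hzb : dist (γ t) b = d - t := by
    rw [← hd, hiso t hmem d ⟨hd0, le_refl d⟩]
    rw [abs_of_nonpos (by linarith)]; ring
  have h4 := four_point p (γ t) a b
  have hmax : max (dist p a + dist (γ t) b) (dist p b + dist (γ t) a) =
      (dist a p + dist b p + d) / 2 := by
    rw [hza, hzb, dist_comm p a, dist_comm p b, ht]
    rw [max_eq_left (by linarith)]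
    ring_nf
  rw [hmax] at h4
  have : dist p (γ t) ≤ (dist a p + dist b p - d) / 2 + 2 * Real.log 28 := by linarith
  linarith

noncomputable def hpt (u : ℝ) : ℍ :=
  UpperHalfPlane.mk (Complex.I * (Real.exp u : ℂ)) (by rw [Complex.mul_im, Complex.I_re, Complex.I_im, Complex.ofReal_re, Complex.ofReal_im]; simpa using Real.exp_pos u)

lemma hpt_coe (u : ℝ) : ((hpt u) : ℂ) = Complex.I * (Real.exp u : ℂ) := rfl

lemma hpt_im (u : ℝ) : (hpt u).im = Real.exp u := by
  have h : (hpt u).im = ((hpt u : ℂ)).im := (UpperHalfPlane.coe_im _).symm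
  rw [h, hpt_coe, Complex.mul_im]
  simp [Complex.exp_ofReal_re]

lemma dist_hpt (u v : ℝ) : dist (hpt u) (hpt v) = |u - v| := by
  rw [UpperHalfPlane.dist_eq]
  have h1 : dist ((hpt u) : ℂ) ((hpt v) : ℂ) = |Real.exp u - Real.exp v| := by
    rw [Complex.dist_eq, hpt_coe, hpt_coe, ← mul_sub, norm_mul, Complex.norm_I, one_mul,
      ← Complex.ofReal_sub, Complex.norm_real, Real.norm_eq_abs]
  have h2 : Real.sqrt ((hpt u).im * (hpt v).im) = Real.exp ((u + v) / 2) := by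
    rw [hpt_im, hpt_im, ← Real.exp_add]
    have e : Real.exp (u + v) = Real.exp ((u + v) / 2) ^ 2 := by
      rw [← Real.exp_nat_mul]
      congr 1
      push_cast
      ring
    rw [e, Real.sqrt_sq (Real.exp_pos _).le]
  have e1 : Real.exp ((u+v)/2) * Real.exp ((u-v)/2) = Real.exp u := by
    rw [← Real.exp_add]; congr 1; ring
  have e2 : Real.exp ((u+v)/2) * Real.exp (-((u-v)/2)) = Real.exp v := by
    rw [← Real.exp_add]; congr 1; ring
  have key : Real.exp u - Real.exp v = Real.exp ((u+v)/2) * (2 * Real.sinh ((u-v)/2)) := by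
    rw [Real.sinh_eq, ← e1, ← e2]; ring
  have h3 : |Real.exp u - Real.exp v| / (2 * Real.exp ((u + v) / 2)) =
      Real.sinh (|u - v| / 2) := by
    rw [key, abs_mul, abs_of_pos (Real.exp_pos _), abs_mul, abs_of_pos (show (0:ℝ) < 2 by norm_num),
      Real.abs_sinh]
    rw [show |u - v| / 2 = |(u - v) / 2| by rw [abs_div]; norm_num]
    field_simp
  rw [h1, h2, h3, Real.arsinh_sinh]
  field_simp

lemma le_of_sq_le_sq' (a b : ℝ) (ha : 0 ≤ a) (hb : 0 ≤ b) (h : a*a ≤ b*b) : a ≤ b := by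
  nlinarith

lemma aux_sqrt (E y : ℝ) (hy : 0 < y) (hyE : y ≤ E) :
    Real.sqrt y + Real.sqrt (2*E - 2*y) ≤ 2 * Real.sqrt E := by
  set p := Real.sqrt y with hp
  set q := Real.sqrt (2*E - 2*y) with hq
  set r := Real.sqrt E with hr
  have hp0 : 0 ≤ p := Real.sqrt_nonneg _
  have hq0 : 0 ≤ q := Real.sqrt_nonneg _
  have hr0 : 0 ≤ r := Real.sqrt_nonneg _
  have hp2 : p * p = y := Real.mul_self_sqrt hy.le
  have hq2 : q * q = 2*E - 2*y := Real.mul_self_sqrt (by linarith)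
  have hr2 : r * r = E := Real.mul_self_sqrt (by linarith)
  have hpq : 2 * (p * q) ≤ 2*E + y := by
    apply le_of_sq_le_sq' _ _ (by positivity) (by linarith)
    nlinarith [sq_nonneg (2*E - y), sq_nonneg y]
  apply le_of_sq_le_sq' _ _ (by positivity) (by positivity)
  nlinarith

/-- For a point `a` on the circle of radius `E = exp u`, the distance to the
top point `i E` of that circle satisfies `exp (dist) * a.im ≤ 4 E`. -/
lemma exp_dist_circle (u : ℝ) (a : ℍ) (habs : ‖(a : ℂ)‖ = Real.exp u) :
    Real.exp (dist (hpt u) a) * a.im ≤ 4 * Real.exp u := by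
  set E := Real.exp u with hE
  have hE0 : 0 < E := Real.exp_pos u
  have hima : 0 < a.im := a.im_pos
  have himle : a.im ≤ E := by
    rw [← habs]
    have h := Complex.abs_im_le_norm (a : ℂ)
    rw [UpperHalfPlane.coe_im] at h
    exact le_trans (le_abs_self _) h
  have habs2 : (a:ℂ).re * (a:ℂ).re + (a:ℂ).im * (a:ℂ).im = E * E := by
    have h := Complex.sq_norm (a:ℂ)
    rw [habs, Complex.normSq_apply] at h
    nlinarith [h]
  have hre : ((hpt u : ℂ) - a).re = -(a:ℂ).re := by
    rw [hpt_coe, Complex.sub_re, Complex.mul_re]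
    simp [Complex.exp_ofReal_re, Complex.exp_ofReal_im]
  have him : ((hpt u : ℂ) - a).im = E - (a:ℂ).im := by
    rw [hpt_coe, Complex.sub_im, Complex.mul_im]
    simp [Complex.exp_ofReal_re, Complex.exp_ofReal_im, hE]
  have hnorm : dist ((hpt u) : ℂ) (a : ℂ) = Real.sqrt (2*E*E - 2*E*a.im) := by
    rw [Complex.dist_eq, Complex.norm_def, Complex.normSq_apply, hre, him]
    congr 1
    have hca : (a:ℂ).im = a.im := UpperHalfPlane.coe_im a
    rw [hca] at habs2 ⊢
    nlinarith [habs2]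
  have hsE : 0 < Real.sqrt E := Real.sqrt_pos.2 hE0
  have hsy : 0 < Real.sqrt a.im := Real.sqrt_pos.2 hima
  have hDsplit : Real.sqrt (2*E*E - 2*E*a.im) = Real.sqrt E * Real.sqrt (2*E - 2*a.im) := by
    rw [← Real.sqrt_mul hE0.le]
    congr 1
    ring
  have hT : Tf (hpt u) a * Real.sqrt a.im ≤ 2 * Real.sqrt E := by
    unfold Tf sfun
    rw [hpt_im, ← hE, hnorm, hDsplit]
    have key : (Real.sqrt E * Real.sqrt (2*E-2*a.im) / (Real.sqrt E * Real.sqrt a.im) + 1) *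
        Real.sqrt a.im = Real.sqrt (2*E-2*a.im) + Real.sqrt a.im := by
      field_simp
    rw [key]
    linarith [aux_sqrt E a.im hima himle]
  have hexp : Real.exp (dist (hpt u) a) =
      Real.exp (dist (hpt u) a / 2) * Real.exp (dist (hpt u) a / 2) := by
    rw [← Real.exp_add]
    congr 1
    ring
  have hehalf := exp_half_le_Tf (hpt u) a
  have hTnn : (0:ℝ) ≤ Tf (hpt u) a := le_trans zero_le_one (one_le_Tf _ _)
  have step1 : Real.exp (dist (hpt u) a / 2) * Real.sqrt a.im ≤ Tf (hpt u) a * Real.sqrt a.im :=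
    mul_le_mul_of_nonneg_right hehalf (Real.sqrt_nonneg _)
  have hy2 : Real.sqrt a.im * Real.sqrt a.im = a.im := Real.mul_self_sqrt hima.le
  have hE2 : Real.sqrt E * Real.sqrt E = E := Real.mul_self_sqrt hE0.le
  have e1 : Real.exp (dist (hpt u) a) * a.im =
      (Real.exp (dist (hpt u) a / 2) * Real.sqrt a.im) *
        (Real.exp (dist (hpt u) a / 2) * Real.sqrt a.im) := by
    rw [hexp]
    linear_combination (- Real.exp (dist (hpt u) a / 2) * Real.exp (dist (hpt u) a / 2)) * hy2
  rw [e1]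
  have h2 : (Real.exp (dist (hpt u) a / 2) * Real.sqrt a.im) *
      (Real.exp (dist (hpt u) a / 2) * Real.sqrt a.im) ≤ (2 * Real.sqrt E) * (2 * Real.sqrt E) :=
    mul_le_mul (step1.trans hT) (step1.trans hT) (by positivity) (by positivity)
  have h3 : (2 * Real.sqrt E) * (2 * Real.sqrt E) = 4 * E := by
    linear_combination 4 * hE2
  linarith

lemma num_ineq (c E : ℝ) (hc : 2.7182818283 < c) (hcE : c ≤ E) :
    64 * E^2 ≤ c^6 * (E-1)^2 := by
  have hstep : (c - 1) * E ≤ c * (E - 1) := by nlinarith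
  have hsq : ((c - 1) * E) * ((c - 1) * E) ≤ (c * (E - 1)) * (c * (E - 1)) :=
    mul_self_le_mul_self (by nlinarith) hstep
  have hA : (64:ℝ) ≤ c^4 * (c-1)^2 := by
    have hc2 : (7:ℝ) ≤ c^2 := by nlinarith
    have hc4 : (49:ℝ) ≤ c^4 := by nlinarith
    have hd2 : (2.89:ℝ) ≤ (c-1)^2 := by nlinarith
    nlinarith [mul_le_mul hc4 hd2 (by norm_num) (by nlinarith)]
  have t1 : 64 * E^2 ≤ (c^4 * (c-1)^2) * E^2 :=
    mul_le_mul_of_nonneg_right hA (sq_nonneg E)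
  have t2 : (c^4 * (c-1)^2) * E^2 = c^4 * (((c-1)*E)*((c-1)*E)) := by ring
  have t3 : c^4 * (((c-1)*E)*((c-1)*E)) ≤ c^4 * ((c*(E-1))*(c*(E-1))) :=
    mul_le_mul_of_nonneg_left hsq (by positivity)
  have t4 : c^4 * ((c*(E-1))*(c*(E-1))) = c^6 * (E-1)^2 := by ring
  linarith

lemma key_fact (l : ℝ) (hl : 1 ≤ l) (a b : ℍ)
    (ha : ‖(a : ℂ)‖ = 1) (hb : ‖(b : ℂ)‖ = Real.exp l) :
    dist a (hpt 0) + l + dist (hpt l) b ≤ dist a b + 6 := by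
  have hy0 : 0 < a.im := a.im_pos
  have hw0 : 0 < b.im := b.im_pos
  have hc : (2.7182818283 : ℝ) < Real.exp 1 := Real.exp_one_gt_d9
  have hcE : Real.exp 1 ≤ Real.exp l := Real.exp_le_exp.mpr hl
  have hE1 : (1:ℝ) < Real.exp l := by linarith
  have f1 : Real.exp (dist (hpt 0) a) * a.im ≤ 4 := by
    have h := exp_dist_circle 0 a (by rw [Real.exp_zero]; exact ha)
    rw [Real.exp_zero] at h
    linarith
  have f2 : Real.exp (dist (hpt l) b) * b.im ≤ 4 * Real.exp l := exp_dist_circle l b hb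
  have hdistC : Real.exp l - 1 ≤ dist (a : ℂ) (b : ℂ) := by
    have h := norm_sub_norm_le ((b : ℂ)) ((a : ℂ))
    rw [ha, hb] at h
    calc Real.exp l - 1 ≤ ‖(b : ℂ) - (a : ℂ)‖ := h
      _ = dist (a : ℂ) (b : ℂ) := by rw [dist_eq_norm, norm_sub_rev]
  have hsab : sfun a b ≤ 2 * Real.exp (dist a b / 2) := by
    have h := Tf_le_two_exp_half a b
    unfold Tf at h
    linarith
  have hEineq : Real.exp l - 1 ≤
      2 * Real.exp (dist a b / 2) * (Real.sqrt a.im * Real.sqrt b.im) := by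
    have hm := sfun_mul a b
    have h2 : dist (a:ℂ) (b:ℂ) ≤
        2 * Real.exp (dist a b / 2) * (Real.sqrt a.im * Real.sqrt b.im) := by
      rw [← hm]
      apply mul_le_mul_of_nonneg_right hsab (by positivity)
    linarith
  have m2 : (Real.exp l - 1) * (Real.exp l - 1) ≤ 4 * Real.exp (dist a b) * (a.im * b.im) := by
    have hsq := mul_self_le_mul_self (by linarith : (0:ℝ) ≤ Real.exp l - 1) hEineq
    have hy2 : Real.sqrt a.im * Real.sqrt a.im = a.im := Real.mul_self_sqrt hy0.le
    have hw2 : Real.sqrt b.im * Real.sqrt b.im = b.im := Real.mul_self_sqrt hw0.le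
    have hex : Real.exp (dist a b / 2) * Real.exp (dist a b / 2) = Real.exp (dist a b) := by
      rw [← Real.exp_add]; congr 1; ring
    have hcomb : (Real.exp l - 1) * (Real.exp l - 1) ≤
        4 * (Real.exp (dist a b / 2) * Real.exp (dist a b / 2)) *
        ((Real.sqrt a.im * Real.sqrt a.im) * (Real.sqrt b.im * Real.sqrt b.im)) :=
      hsq.trans_eq (by ring)
    rw [hy2, hw2, hex] at hcomb
    exact hcomb
  have h6 : Real.exp 6 = (Real.exp 1)^6 := by
    rw [← Real.exp_nat_mul]
    norm_num
  have h64 : 64 * (Real.exp l)^2 ≤ Real.exp 6 * (Real.exp l - 1)^2 := by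
    rw [h6]
    exact num_ineq (Real.exp 1) (Real.exp l) hc hcE
  have m1 : Real.exp (dist a (hpt 0)) * Real.exp l * Real.exp (dist (hpt l) b) * (a.im * b.im)
      ≤ 16 * (Real.exp l)^2 := by
    rw [dist_comm a (hpt 0)]
    have p2 : 0 < Real.exp (dist (hpt l) b) * b.im := by positivity
    have hAB : (Real.exp (dist (hpt 0) a) * a.im) * (Real.exp (dist (hpt l) b) * b.im) ≤
        4 * (4 * Real.exp l) := mul_le_mul f1 f2 p2.le (by norm_num)
    have hABE := mul_le_mul_of_nonneg_right hAB (Real.exp_pos l).le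
    exact le_of_le_of_eq (le_of_eq_of_le (by ring) hABE) (by ring)
  have final : Real.exp (dist a (hpt 0) + l + dist (hpt l) b) ≤ Real.exp (dist a b + 6) := by
    rw [Real.exp_add, Real.exp_add, Real.exp_add]
    have hcmp : Real.exp (dist a (hpt 0)) * Real.exp l * Real.exp (dist (hpt l) b) *
        (4 * (a.im * b.im)) ≤ Real.exp (dist a b) * Real.exp 6 * (4 * (a.im * b.im)) := by
      have c1 : Real.exp (dist a (hpt 0)) * Real.exp l * Real.exp (dist (hpt l) b) *
          (4 * (a.im * b.im)) ≤ 64 * (Real.exp l)^2 := by nlinarith [m1]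
      have c2 : Real.exp 6 * (Real.exp l - 1)^2 ≤
          Real.exp (dist a b) * Real.exp 6 * (4 * (a.im * b.im)) := by
        nlinarith [m2, Real.exp_pos (6:ℝ), Real.exp_pos (dist a b)]
      linarith
    exact le_of_mul_le_mul_right hcmp (by positivity)
  have hlog := Real.log_le_log (Real.exp_pos _) final
  rwa [Real.log_exp, Real.log_exp] at hlog

lemma mkI_eq_hpt0 : UpperHalfPlane.mk Complex.I (by simp) = hpt 0 := by
  apply UpperHalfPlane.ext
  rw [UpperHalfPlane.coe_mk, hpt_coe, Real.exp_zero]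
  simp
  simp

lemma mkIE_eq_hptl (l : ℝ) :
    UpperHalfPlane.mk (Complex.I * (Real.exp l : ℂ)) (by rw [Complex.mul_im, Complex.I_re, Complex.I_im, Complex.ofReal_re, Complex.ofReal_im]; simpa using Real.exp_pos l) =
      hpt l := rfl

lemma dist_hpt' (u v : ℝ) (h : u ≤ v) : dist (hpt u) (hpt v) = v - u := by
  rw [dist_hpt, abs_of_nonpos (by linarith)]
  ring

lemma Oset_eq (l : ℝ) (hl : 0 ≤ l) :
    {p : ℍ | (p : ℂ).re = 0 ∧ 1 ≤ (p : ℂ).im ∧ (p : ℂ).im ≤ Real.exp l} =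
      hpt '' Set.Icc 0 l := by
  ext p
  constructor
  · rintro ⟨hre, h1, h2⟩
    have him : (0:ℝ) < (p : ℂ).im := by linarith
    refine ⟨Real.log (p : ℂ).im, ⟨Real.log_nonneg h1, ?_⟩, ?_⟩
    · exact (Real.log_le_iff_le_exp him).mpr h2
    · apply UpperHalfPlane.ext
      rw [hpt_coe, Real.exp_log him]
      apply Complex.ext
      · simp only [Complex.mul_re, Complex.I_re, Complex.ofReal_re, Complex.I_im,
          Complex.ofReal_im, UpperHalfPlane.coe_re]
        rw [← UpperHalfPlane.coe_re p, hre]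
        ring
      · simp [Complex.mul_im]
  · rintro ⟨u, ⟨hu0, hul⟩, rfl⟩
    refine ⟨?_, ?_, ?_⟩
    · rw [hpt_coe, Complex.mul_re]; simp [Complex.exp_ofReal_im]
    · rw [hpt_coe]
      have : (Complex.I * (Real.exp u : ℂ)).im = Real.exp u := by
        rw [Complex.mul_im]; simp [Complex.exp_ofReal_re]
      rw [this]
      calc (1:ℝ) = Real.exp 0 := Real.exp_zero.symm
        _ ≤ Real.exp u := Real.exp_le_exp.mpr hu0
    · rw [hpt_coe]
      have : (Complex.I * (Real.exp u : ℂ)).im = Real.exp u := by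
        rw [Complex.mul_im]; simp [Complex.exp_ofReal_re]
      rw [this]
      exact Real.exp_le_exp.mpr hul

/-- There is a universal constant `N` such that for every `ℓ ≥ 1`, points `a, b` of the
upper half plane with `|a| = 1` and `|b| = e^ℓ`, the geodesic `[a,b]` lies within Hausdorff
distance `N` (for the hyperbolic metric) of the broken path `[a,i] ∪ 𝒪 ∪ [i·e^ℓ, b]`,
where `𝒪 = {i·y : 1 ≤ y ≤ e^ℓ}` is the common perpendicular of the strip of width `ℓ`. -/
theorem broken_path_hausdorff_close :
    ∃ N : ℝ, 0 < N ∧ ∀ ℓ : ℝ, 1 ≤ ℓ →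
      ∀ a b : UpperHalfPlane,
        ‖(a : ℂ)‖ = 1 → ‖(b : ℂ)‖ = Real.exp ℓ →
      ∀ γ γ₁ γ₂ : ℝ → UpperHalfPlane,
        (∀ s ∈ Set.Icc (0 : ℝ) (dist a b), ∀ u ∈ Set.Icc (0 : ℝ) (dist a b),
          dist (γ s) (γ u) = |s - u|) →
        γ 0 = a → γ (dist a b) = b →
        (∀ s ∈ Set.Icc (0 : ℝ) (dist a (UpperHalfPlane.mk Complex.I (by simp))),
          ∀ u ∈ Set.Icc (0 : ℝ) (dist a (UpperHalfPlane.mk Complex.I (by simp))),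
          dist (γ₁ s) (γ₁ u) = |s - u|) →
        γ₁ 0 = a →
        γ₁ (dist a (UpperHalfPlane.mk Complex.I (by simp))) =
          UpperHalfPlane.mk Complex.I (by simp) →
        (∀ s ∈ Set.Icc (0 : ℝ)
            (dist (UpperHalfPlane.mk (Complex.I * (Real.exp ℓ : ℂ))
              (by rw [Complex.mul_im, Complex.I_re, Complex.I_im, Complex.ofReal_re, Complex.ofReal_im]; simpa using Real.exp_pos ℓ)) b),
          ∀ u ∈ Set.Icc (0 : ℝ)
            (dist (UpperHalfPlane.mk (Complex.I * (Real.exp ℓ : ℂ))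
              (by rw [Complex.mul_im, Complex.I_re, Complex.I_im, Complex.ofReal_re, Complex.ofReal_im]; simpa using Real.exp_pos ℓ)) b),
          dist (γ₂ s) (γ₂ u) = |s - u|) →
        γ₂ 0 = UpperHalfPlane.mk (Complex.I * (Real.exp ℓ : ℂ))
          (by rw [Complex.mul_im, Complex.I_re, Complex.I_im, Complex.ofReal_re, Complex.ofReal_im]; simpa using Real.exp_pos ℓ) →
        γ₂ (dist (UpperHalfPlane.mk (Complex.I * (Real.exp ℓ : ℂ))
            (by rw [Complex.mul_im, Complex.I_re, Complex.I_im, Complex.ofReal_re, Complex.ofReal_im]; simpa using Real.exp_pos ℓ)) b) = b →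
        Metric.hausdorffDist (γ '' Set.Icc (0 : ℝ) (dist a b))
          ((γ₁ '' Set.Icc (0 : ℝ)
              (dist a (UpperHalfPlane.mk Complex.I (by simp)))) ∪
            {p : UpperHalfPlane | (p : ℂ).re = 0 ∧ 1 ≤ (p : ℂ).im ∧
              (p : ℂ).im ≤ Real.exp ℓ} ∪
            (γ₂ '' Set.Icc (0 : ℝ)
              (dist (UpperHalfPlane.mk (Complex.I * (Real.exp ℓ : ℂ))
                (by rw [Complex.mul_im, Complex.I_re, Complex.I_im, Complex.ofReal_re, Complex.ofReal_im]; simpa using Real.exp_pos ℓ)) b))) ≤ N := by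
  have hlog28 : (0:ℝ) ≤ Real.log 28 := Real.log_nonneg (by norm_num)
  refine ⟨6 + 4 * Real.log 28, by linarith, ?_⟩
  intro ℓ hℓ a b ha hb γ γ₁ γ₂ hγ hγ0 hγd hγ₁ hγ₁0 hγ₁d hγ₂ hγ₂0 hγ₂d
  simp only [mkI_eq_hpt0, mkIE_eq_hptl] at hγ₁ hγ₁d hγ₂ hγ₂0 hγ₂d ⊢
  rw [Oset_eq ℓ (by linarith)]
  set N : ℝ := 6 + 4 * Real.log 28 with hN
  set d : ℝ := dist a b with hd
  set L1 : ℝ := dist a (hpt 0) with hL1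
  set L3 : ℝ := dist (hpt ℓ) b with hL3
  have hd0 : 0 ≤ d := dist_nonneg
  have hL10 : 0 ≤ L1 := dist_nonneg
  have hL30 : 0 ≤ L3 := dist_nonneg
  have hl0 : (0:ℝ) ≤ ℓ := by linarith
  have hkey : L1 + ℓ + L3 ≤ d + 6 := key_fact ℓ hℓ a b ha hb
  have hd01 : dist (hpt 0) (hpt ℓ) = ℓ := dist_hpt' 0 ℓ hl0 |>.trans (by ring)
  -- the three pieces of the broken path
  set S1 : Set ℍ := γ₁ '' Set.Icc 0 L1 with hS1
  set SO : Set ℍ := hpt '' Set.Icc 0 ℓ with hSO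
  set S2 : Set ℍ := γ₂ '' Set.Icc 0 L3 with hS2
  -- distance sum bound on the broken path
  have hsumP : ∀ p ∈ (S1 ∪ SO) ∪ S2, dist a p + dist b p ≤ d + 6 := by
    rintro p ((⟨s, hs, rfl⟩ | ⟨u, hu, rfl⟩) | ⟨s, hs, rfl⟩)
    · have h1 : dist a (γ₁ s) = s := by
        rw [← hγ₁0, hγ₁ 0 ⟨le_refl 0, hL10⟩ s hs, abs_of_nonpos (by linarith [hs.1])]
        ring
      have h2 : dist (hpt 0) (γ₁ s) = L1 - s := by
        rw [← hγ₁d, hγ₁ L1 ⟨hL10, le_refl L1⟩ s hs, abs_of_nonneg (by linarith [hs.2])]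
      have h3 : dist b (γ₁ s) ≤ L3 + ℓ + (L1 - s) := by
        calc dist b (γ₁ s) ≤ dist b (hpt ℓ) + dist (hpt ℓ) (hpt 0) + dist (hpt 0) (γ₁ s) :=
              dist_triangle4 b (hpt ℓ) (hpt 0) (γ₁ s)
          _ = L3 + ℓ + (L1 - s) := by
              rw [dist_comm b (hpt ℓ), ← hL3, dist_comm (hpt ℓ) (hpt 0), hd01, h2]
      have := hs.1
      linarith
    · have h1 : dist a (hpt u) ≤ L1 + u := by
        calc dist a (hpt u) ≤ dist a (hpt 0) + dist (hpt 0) (hpt u) := dist_triangle _ _ _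
          _ = L1 + u := by rw [← hL1, dist_hpt' 0 u hu.1]; ring
      have h2 : dist b (hpt u) ≤ L3 + (ℓ - u) := by
        calc dist b (hpt u) ≤ dist b (hpt ℓ) + dist (hpt ℓ) (hpt u) := dist_triangle _ _ _
          _ = L3 + (ℓ - u) := by
              rw [dist_comm b (hpt ℓ), ← hL3, dist_comm (hpt ℓ) (hpt u), dist_hpt' u ℓ hu.2]
      linarith
    · have h1 : dist b (γ₂ s) = L3 - s := by
        rw [← hγ₂d, hγ₂ L3 ⟨hL30, le_refl L3⟩ s hs, abs_of_nonneg (by linarith [hs.2])]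
      have h2 : dist (hpt ℓ) (γ₂ s) = s := by
        rw [← hγ₂0, hγ₂ 0 ⟨le_refl 0, hL30⟩ s hs, abs_of_nonpos (by linarith [hs.1])]
        ring
      have h3 : dist a (γ₂ s) ≤ L1 + ℓ + s := by
        calc dist a (γ₂ s) ≤ dist a (hpt 0) + dist (hpt 0) (hpt ℓ) + dist (hpt ℓ) (γ₂ s) :=
              dist_triangle4 a (hpt 0) (hpt ℓ) (γ₂ s)
          _ = L1 + ℓ + s := by rw [← hL1, hd01, h2]
      have := hs.1
      linarith
  -- direction: broken path into neighborhood of the geodesic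
  have dir2 : ∀ p ∈ (S1 ∪ SO) ∪ S2, ∃ q ∈ γ '' Set.Icc (0:ℝ) d, dist p q ≤ N := by
    intro p hp
    obtain ⟨t, htmem, hclose⟩ := near_geodesic a b p γ hγ hγ0 hγd (hsumP p hp)
    exact ⟨γ t, Set.mem_image_of_mem γ htmem, by rw [hN]; linarith⟩
  -- connectedness of the broken path
  have hC1 : IsConnected S1 := by
    apply IsConnected.image (isConnected_Icc hL10)
    apply LipschitzOnWith.continuousOn (K := 1)
    apply LipschitzOnWith.of_dist_le_mul
    intro x hx y hy
    rw [hγ₁ x hx y hy, Real.dist_eq, NNReal.coe_one, one_mul]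
  have hC2 : IsConnected SO := by
    apply IsConnected.image (isConnected_Icc hl0)
    exact (Isometry.of_dist_eq (fun u v => by rw [dist_hpt, Real.dist_eq])).continuous.continuousOn
  have hC3 : IsConnected S2 := by
    apply IsConnected.image (isConnected_Icc hL30)
    apply LipschitzOnWith.continuousOn (K := 1)
    apply LipschitzOnWith.of_dist_le_mul
    intro x hx y hy
    rw [hγ₂ x hx y hy, Real.dist_eq, NNReal.coe_one, one_mul]
  have hI0S1 : hpt 0 ∈ S1 := ⟨L1, ⟨hL10, le_refl L1⟩, hγ₁d⟩
  have hI0SO : hpt 0 ∈ SO := ⟨0, ⟨le_refl 0, hl0⟩, rfl⟩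
  have hI1SO : hpt ℓ ∈ SO := ⟨ℓ, ⟨hl0, le_refl ℓ⟩, rfl⟩
  have hI1S2 : hpt ℓ ∈ S2 := ⟨0, ⟨le_refl 0, hL30⟩, hγ₂0⟩
  have hPconn : IsConnected ((S1 ∪ SO) ∪ S2) :=
    (hC1.union ⟨hpt 0, hI0S1, hI0SO⟩ hC2).union ⟨hpt ℓ, Or.inr hI1SO, hI1S2⟩ hC3
  have haP : a ∈ (S1 ∪ SO) ∪ S2 := Or.inl (Or.inl ⟨0, ⟨le_refl 0, hL10⟩, hγ₁0⟩)
  have hbP : b ∈ (S1 ∪ SO) ∪ S2 := Or.inr ⟨L3, ⟨hL30, le_refl L3⟩, hγ₂d⟩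
  -- direction: geodesic into neighborhood of the broken path
  have dir1 : ∀ q ∈ γ '' Set.Icc (0:ℝ) d, ∃ p ∈ (S1 ∪ SO) ∪ S2, dist q p ≤ N := by
    rintro q ⟨t, htmem, rfl⟩
    set g : ℍ → ℝ := fun p => dist a p - dist b p with hg
    have hgc : ContinuousOn g ((S1 ∪ SO) ∪ S2) :=
      ((continuous_const.dist continuous_id).sub
        (continuous_const.dist continuous_id)).continuousOn
    have hga : g a = -d := by
      simp only [hg, dist_self, dist_comm b a]
      rw [← hd]
      ring
    have hgb : g b = d := by
      simp only [hg, dist_self, ← hd]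
      ring
    have hval : 2 * t - d ∈ Set.Icc (g a) (g b) := by
      rw [hga, hgb]
      exact ⟨by linarith [htmem.1], by linarith [htmem.2]⟩
    obtain ⟨p, hpP, hgp⟩ :=
      hPconn.isPreconnected.intermediate_value haP hbP hgc hval
    obtain ⟨t', ht'mem, hclose⟩ := near_geodesic a b p γ hγ hγ0 hγd (hsumP p hpP)
    have hat' : dist a (γ t') = t' := by
      rw [← hγ0, hγ 0 ⟨le_refl 0, hd0⟩ t' ht'mem, abs_of_nonpos (by linarith [ht'mem.1])]
      ring
    have hbt' : dist b (γ t') = d - t' := by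
      rw [← hγd, hγ d ⟨hd0, le_refl d⟩ t' ht'mem, abs_of_nonneg (by linarith [ht'mem.2])]
    have e1 : |dist a p - t'| ≤ dist p (γ t') := by
      have h := abs_dist_sub_le p (γ t') a
      rw [dist_comm p a, dist_comm (γ t') a, hat'] at h
      exact h
    have e2 : |dist b p - (d - t')| ≤ dist p (γ t') := by
      have h := abs_dist_sub_le p (γ t') b
      rw [dist_comm p b, dist_comm (γ t') b, hbt'] at h
      exact h
    have hgp' : dist a p - dist b p = 2 * t - d := hgp
    have e1' := abs_le.mp e1
    have e2' := abs_le.mp e2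
    have htt' : |t - t'| ≤ 3 + 2 * Real.log 28 := by
      rw [abs_le]
      constructor <;> nlinarith [e1'.1, e1'.2, e2'.1, e2'.2, hclose]
    have hdist_tt' : dist (γ t) (γ t') = |t - t'| := hγ t htmem t' ht'mem
    refine ⟨p, hpP, ?_⟩
    calc dist (γ t) p ≤ dist (γ t) (γ t') + dist (γ t') p := dist_triangle _ _ _
      _ = |t - t'| + dist p (γ t') := by rw [hdist_tt', dist_comm (γ t') p]
      _ ≤ (3 + 2 * Real.log 28) + (3 + 2 * Real.log 28) := add_le_add htt' hclose
      _ = N := by rw [hN]; ring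
  exact Metric.hausdorffDist_le_of_mem_dist (by rw [hN]; linarith) dir1 dir2
end
end

section
/- For a continuously differentiable path γ = (γ₁, γ₂, γ₃) : [0,1] → ℝ³, define its Sol-length as L(γ) = ∫₀¹ √(e^{2γ₃(s)}·γ₁′(s)² + e^{−2γ₃(s)}·γ₂′(s)² + γ₃′(s)²) ds. Suppose γ(0) = (x, y, t) and γ(1) = (x′, y′, t) have equal third coordinate t, and that L(γ) ≤ D for some D ≥ 0. Then √(e^{2t}·(x − x′)² + e^{−2t}·(y − y′)²) ≤ D·e^{D/2}. -/
open Real Set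


private lemma solAux_contDeriv (f : ℝ → ℝ) (hf : ContDiffOn ℝ 1 f (Icc 0 1)) :
    ContinuousOn (derivWithin f (Icc 0 1)) (Icc 0 1) :=
  hf.continuousOn_derivWithin (uniqueDiffOn_Icc one_pos) le_rfl

private lemma solAux_ftc (f : ℝ → ℝ) (hf : ContDiffOn ℝ 1 f (Icc 0 1))
    {a b : ℝ} (ha : a ∈ Icc (0:ℝ) 1) (hb : b ∈ Icc (0:ℝ) 1) (hab : a ≤ b) :
    ∫ s in a..b, derivWithin f (Icc 0 1) s = f b - f a := by
  apply intervalIntegral.integral_eq_sub_of_hasDeriv_right_of_le hab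
  · exact hf.continuousOn.mono (Icc_subset_Icc ha.1 hb.2)
  · intro s hs
    have hs' : s ∈ Ioo (0:ℝ) 1 := ⟨lt_of_le_of_lt ha.1 hs.1, lt_of_lt_of_le hs.2 hb.2⟩
    have h : HasDerivWithinAt f (derivWithin f (Icc 0 1) s) (Icc 0 1) s :=
      (hf.differentiableOn one_ne_zero s (Ioo_subset_Icc_self hs')).hasDerivWithinAt
    exact (h.hasDerivAt (Icc_mem_nhds hs'.1 hs'.2)).hasDerivWithinAt
  · exact ((solAux_contDeriv f hf).mono
      (by rw [uIcc_of_le hab]; exact Icc_subset_Icc ha.1 hb.2)).intervalIntegrable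

private lemma solAux_CS {c₁ c₂ u v : ℝ} (hc : c₁ ^ 2 + c₂ ^ 2 = 1) :
    c₁ * (-u) + c₂ * (-v) ≤ Real.sqrt (u ^ 2 + v ^ 2) := by
  have hCS : (c₁ * u + c₂ * v) ^ 2 ≤ u ^ 2 + v ^ 2 := by
    nlinarith [sq_nonneg (c₁ * v - c₂ * u)]
  calc c₁ * (-u) + c₂ * (-v) = -(c₁ * u + c₂ * v) := by ring
    _ ≤ |c₁ * u + c₂ * v| := neg_le_abs _
    _ = Real.sqrt ((c₁ * u + c₂ * v) ^ 2) := (Real.sqrt_sq_eq_abs _).symm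
    _ ≤ Real.sqrt (u ^ 2 + v ^ 2) := Real.sqrt_le_sqrt hCS

set_option maxHeartbeats 1000000 in

/-- Uniform properness of level surfaces in the Sol model metric
`ds² = e^{2t}dx² + e^{−2t}dy² + dt²`: if a C¹ path joins two points `(x,y,t)` and
`(x′,y′,t)` on the same level surface and has Sol-length at most `D`, then the flat
level-surface distance `√(e^{2t}(x−x′)² + e^{−2t}(y−y′)²)` is at most `D·e^{D/2}`. -/
theorem sol_level_surface_uniformly_proper
    (γ₁ γ₂ γ₃ : ℝ → ℝ)
    (h₁ : ContDiffOn ℝ 1 γ₁ (Icc 0 1)) (h₂ : ContDiffOn ℝ 1 γ₂ (Icc 0 1))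
    (h₃ : ContDiffOn ℝ 1 γ₃ (Icc 0 1))
    (x y t x' y' : ℝ)
    (h0 : γ₁ 0 = x ∧ γ₂ 0 = y ∧ γ₃ 0 = t)
    (h1 : γ₁ 1 = x' ∧ γ₂ 1 = y' ∧ γ₃ 1 = t)
    (D : ℝ) (hD : 0 ≤ D)
    (hlen : (∫ s in (0 : ℝ)..1,
        Real.sqrt (Real.exp (2 * γ₃ s) * (derivWithin γ₁ (Icc 0 1) s) ^ 2 +
          Real.exp (-(2 * γ₃ s)) * (derivWithin γ₂ (Icc 0 1) s) ^ 2 +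
          (derivWithin γ₃ (Icc 0 1) s) ^ 2)) ≤ D) :
    Real.sqrt (Real.exp (2 * t) * (x - x') ^ 2 + Real.exp (-(2 * t)) * (y - y') ^ 2) ≤
      D * Real.exp (D / 2) := by
  set g₁ := derivWithin γ₁ (Icc (0:ℝ) 1) with hg₁
  set g₂ := derivWithin γ₂ (Icc (0:ℝ) 1) with hg₂
  set g₃ := derivWithin γ₃ (Icc (0:ℝ) 1) with hg₃
  set f : ℝ → ℝ := fun s => Real.sqrt (Real.exp (2 * γ₃ s) * g₁ s ^ 2 +
      Real.exp (-(2 * γ₃ s)) * g₂ s ^ 2 + g₃ s ^ 2) with hf_def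
  have cg₁ := solAux_contDeriv γ₁ h₁
  have cg₂ := solAux_contDeriv γ₂ h₂
  have cg₃ := solAux_contDeriv γ₃ h₃
  have cf : ContinuousOn f (Icc 0 1) := by
    apply ContinuousOn.sqrt
    exact (((Real.continuous_exp.comp_continuousOn
        (continuousOn_const.mul h₃.continuousOn)).mul (cg₁.pow 2)).add
      ((Real.continuous_exp.comp_continuousOn
        ((continuousOn_const.mul h₃.continuousOn).neg)).mul (cg₂.pow 2))).add (cg₃.pow 2)
  have hfnn : ∀ s, 0 ≤ f s := fun s => Real.sqrt_nonneg _
  -- integrability of f on subintervals of [0,1]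
  have hfint : ∀ a b : ℝ, a ∈ Icc (0:ℝ) 1 → b ∈ Icc (0:ℝ) 1 → a ≤ b →
      IntervalIntegrable f MeasureTheory.volume a b := fun a b ha hb hab =>
    (cf.mono (by rw [uIcc_of_le hab]; exact Icc_subset_Icc ha.1 hb.2)).intervalIntegrable
  -- |g₃| ≤ f pointwise
  have habs : ∀ u, |g₃ u| ≤ f u := by
    intro u
    rw [← Real.sqrt_sq_eq_abs]
    apply Real.sqrt_le_sqrt
    have := (Real.exp_pos (2 * γ₃ u)).le
    have := (Real.exp_pos (-(2 * γ₃ u))).le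
    nlinarith [sq_nonneg (g₁ u), sq_nonneg (g₂ u)]
  -- step 1: |γ₃ s - t| ≤ D / 2
  have hdist : ∀ s ∈ Icc (0:ℝ) 1, |γ₃ s - t| ≤ D / 2 := by
    intro s hs
    have habsint : ∀ a b : ℝ, a ∈ Icc (0:ℝ) 1 → b ∈ Icc (0:ℝ) 1 → (hab : a ≤ b) →
        |∫ u in a..b, g₃ u| ≤ ∫ u in a..b, f u := by
      intro a b ha hb hab
      refine (intervalIntegral.abs_integral_le_integral_abs hab).trans ?_
      apply intervalIntegral.integral_mono_on hab ?_ (hfint a b ha hb hab)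
        (fun u _ => habs u)
      exact ((cg₃.abs).mono (by rw [uIcc_of_le hab]; exact Icc_subset_Icc ha.1 hb.2)).intervalIntegrable
    have e1 : ∫ u in (0:ℝ)..s, g₃ u = γ₃ s - t := by
      rw [solAux_ftc γ₃ h₃ (left_mem_Icc.2 zero_le_one) hs hs.1, h0.2.2]
    have e2 : ∫ u in s..(1:ℝ), g₃ u = t - γ₃ s := by
      rw [solAux_ftc γ₃ h₃ hs (right_mem_Icc.2 zero_le_one) hs.2, h1.2.2]
    have i1 := habsint 0 s (left_mem_Icc.2 zero_le_one) hs hs.1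
    have i2 := habsint s 1 hs (right_mem_Icc.2 zero_le_one) hs.2
    rw [e1] at i1
    rw [e2, abs_sub_comm] at i2
    have hsum : (∫ u in (0:ℝ)..s, f u) + ∫ u in s..(1:ℝ), f u = ∫ u in (0:ℝ)..1, f u :=
      intervalIntegral.integral_add_adjacent_intervals
        (hfint 0 s (left_mem_Icc.2 zero_le_one) hs hs.1)
        (hfint s 1 hs (right_mem_Icc.2 zero_le_one) hs.2)
    linarith
  -- the flat-speed function
  set G : ℝ → ℝ := fun s => Real.sqrt ((Real.exp t * g₁ s) ^ 2 + (Real.exp (-t) * g₂ s) ^ 2)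
    with hG_def
  have hsqrtexp : Real.sqrt (Real.exp D) = Real.exp (D / 2) := by
    rw [show Real.exp D = Real.exp (D / 2) ^ 2 by rw [sq, ← Real.exp_add]; ring_nf]
    exact Real.sqrt_sq (Real.exp_nonneg _)
  have hG_le : ∀ s ∈ Icc (0:ℝ) 1, G s ≤ Real.exp (D / 2) * f s := by
    intro s hs
    have hd := abs_le.1 (hdist s hs)
    have ha : Real.exp t ^ 2 ≤ Real.exp D * Real.exp (2 * γ₃ s) := by
      rw [sq, ← Real.exp_add, ← Real.exp_add]
      exact Real.exp_le_exp.2 (by linarith)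
    have hb : Real.exp (-t) ^ 2 ≤ Real.exp D * Real.exp (-(2 * γ₃ s)) := by
      rw [sq, ← Real.exp_add, ← Real.exp_add]
      exact Real.exp_le_exp.2 (by linarith)
    have key : (Real.exp t * g₁ s) ^ 2 + (Real.exp (-t) * g₂ s) ^ 2 ≤
        Real.exp D * (Real.exp (2 * γ₃ s) * g₁ s ^ 2 +
          Real.exp (-(2 * γ₃ s)) * g₂ s ^ 2 + g₃ s ^ 2) := by
      have h3 := sq_nonneg (g₃ s)
      have := (Real.exp_pos D).le
      nlinarith [sq_nonneg (g₁ s), sq_nonneg (g₂ s)]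
    calc G s ≤ Real.sqrt (Real.exp D * (Real.exp (2 * γ₃ s) * g₁ s ^ 2 +
          Real.exp (-(2 * γ₃ s)) * g₂ s ^ 2 + g₃ s ^ 2)) := Real.sqrt_le_sqrt key
      _ = Real.exp (D / 2) * f s := by
          rw [Real.sqrt_mul (Real.exp_nonneg D), hsqrtexp]
  have cG : ContinuousOn G (Icc 0 1) :=
    (((continuousOn_const.mul cg₁).pow 2).add ((continuousOn_const.mul cg₂).pow 2)).sqrt
  have hGint : IntervalIntegrable G MeasureTheory.volume 0 1 :=
    (cG.mono (by rw [uIcc_of_le zero_le_one])).intervalIntegrable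
  have hintG : (∫ s in (0:ℝ)..1, G s) ≤ D * Real.exp (D / 2) := by
    have h1' : (∫ s in (0:ℝ)..1, G s) ≤ ∫ s in (0:ℝ)..1, Real.exp (D / 2) * f s := by
      apply intervalIntegral.integral_mono_on zero_le_one hGint ?_ hG_le
      exact (intervalIntegrable_const.mul_continuousOn (by rw [uIcc_of_le zero_le_one]; exact cf))
    rw [intervalIntegral.integral_const_mul] at h1'
    have := mul_le_mul_of_nonneg_left hlen (Real.exp_nonneg (D / 2))
    linarith
  -- step 3: endpoint distance ≤ ∫ G
  set A := Real.exp t * (x - x') with hA_def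
  set B := Real.exp (-t) * (y - y') with hB_def
  have hLHS : Real.sqrt (Real.exp (2 * t) * (x - x') ^ 2 + Real.exp (-(2 * t)) * (y - y') ^ 2)
      = Real.sqrt (A ^ 2 + B ^ 2) := by
    rw [hA_def, hB_def]
    congr 1
    rw [mul_pow, mul_pow, sq (Real.exp t), ← Real.exp_add, sq (Real.exp (-t)), ← Real.exp_add]
    ring_nf
  rw [hLHS]
  have hint1 : ∫ u in (0:ℝ)..1, g₁ u = x' - x := by
    rw [solAux_ftc γ₁ h₁ (left_mem_Icc.2 zero_le_one) (right_mem_Icc.2 zero_le_one) zero_le_one,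
      h0.1, h1.1]
  have hint2 : ∫ u in (0:ℝ)..1, g₂ u = y' - y := by
    rw [solAux_ftc γ₂ h₂ (left_mem_Icc.2 zero_le_one) (right_mem_Icc.2 zero_le_one) zero_le_one,
      h0.2.1, h1.2.1]
  have hg₁int : IntervalIntegrable g₁ MeasureTheory.volume 0 1 :=
    (cg₁.mono (by rw [uIcc_of_le zero_le_one])).intervalIntegrable
  have hg₂int : IntervalIntegrable g₂ MeasureTheory.volume 0 1 :=
    (cg₂.mono (by rw [uIcc_of_le zero_le_one])).intervalIntegrable
  have hGnn : (0:ℝ) ≤ ∫ s in (0:ℝ)..1, G s :=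
    intervalIntegral.integral_nonneg zero_le_one (fun u _ => Real.sqrt_nonneg _)
  have hmain : Real.sqrt (A ^ 2 + B ^ 2) ≤ ∫ s in (0:ℝ)..1, G s := by
    rcases eq_or_lt_of_le (Real.sqrt_nonneg (A ^ 2 + B ^ 2)) with h0' | hr
    · rw [← h0']; exact hGnn
    · set r := Real.sqrt (A ^ 2 + B ^ 2) with hr_def
      have hr2 : r ^ 2 = A ^ 2 + B ^ 2 := Real.sq_sqrt (by positivity)
      set c₁ := A / r with hc₁
      set c₂ := B / r with hc₂
      have hc : c₁ ^ 2 + c₂ ^ 2 = 1 := by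
        rw [hc₁, hc₂]
        field_simp
        linarith [hr2]
      have hrAB : r = c₁ * A + c₂ * B := by
        rw [hc₁, hc₂]
        field_simp
        linarith [hr2]
      have hAeq : A = ∫ u in (0:ℝ)..1, (-(Real.exp t * g₁ u)) := by
        rw [intervalIntegral.integral_neg, intervalIntegral.integral_const_mul, hint1, hA_def]
        ring
      have hBeq : B = ∫ u in (0:ℝ)..1, (-(Real.exp (-t) * g₂ u)) := by
        rw [intervalIntegral.integral_neg, intervalIntegral.integral_const_mul, hint2, hB_def]
        ring
      have hcomb : r = ∫ u in (0:ℝ)..1,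
          (c₁ * (-(Real.exp t * g₁ u)) + c₂ * (-(Real.exp (-t) * g₂ u))) := by
        rw [intervalIntegral.integral_add, intervalIntegral.integral_const_mul,
          intervalIntegral.integral_const_mul, ← hAeq, ← hBeq, hrAB]
        · exact ((hg₁int.const_mul (Real.exp t)).neg).const_mul c₁
        · exact ((hg₂int.const_mul (Real.exp (-t))).neg).const_mul c₂
      rw [hcomb]
      apply intervalIntegral.integral_mono_on zero_le_one ?_ hGint
      · intro u _
        exact solAux_CS hc
      · exact (((hg₁int.const_mul (Real.exp t)).neg).const_mul c₁).add
          (((hg₂int.const_mul (Real.exp (-t))).neg).const_mul c₂)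
  linarith
end

section
/- Define F : ℝ × ℝ → ℂ by F(x,t) = e^x·(tanh t + i·sech t). Then for every continuously differentiable path η = (η₁, η₂) : [0,1] → ℝ², the hyperbolic length of F∘η, namely ∫₀¹ |(F∘η)′(s)| / Im((F∘η)(s)) ds, equals ∫₀¹ √(cosh²(η₂(s))·η₁′(s)² + η₂′(s)²) ds. Consequently this hyperbolic length lies between (1/√2)·L(η) and L(η), where L(η) = ∫₀¹ √(cosh(2·η₂(s))·η₁′(s)² + η₂′(s)²) ds is the ladder length of η. -/
open Real Set

private lemma ofReal_comp_within {f : ℝ → ℝ} {u z : ℝ} {s : Set ℝ}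
    (hf : HasDerivWithinAt f u s z) :
    HasDerivWithinAt (fun y : ℝ => ((f y : ℝ) : ℂ)) (u : ℂ) s z := by
  simpa only [Function.comp_def, Complex.ofRealCLM_apply, Complex.real_smul,
    Complex.ofReal_one, mul_one] using
    Complex.ofRealCLM.hasDerivAt.scomp_hasDerivWithinAt z hf

private lemma hasDerivAt_tanh (b : ℝ) :
    HasDerivAt Real.tanh ((Real.cosh b ^ 2)⁻¹) b := by
  have h : Real.tanh = fun x => Real.sinh x / Real.cosh x :=
    funext fun x => Real.tanh_eq_sinh_div_cosh x
  rw [h]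
  have := (Real.hasDerivAt_sinh b).div (Real.hasDerivAt_cosh b)
    (ne_of_gt (Real.cosh_pos b))
  refine this.congr_deriv ?_
  have := Real.cosh_sq_sub_sinh_sq b
  rw [inv_eq_one_div]
  congr 1
  nlinarith [Real.cosh_pos b]

/-- Pointwise computation of the hyperbolic speed of the strip map. -/
private lemma pointwise_eq (η₁ η₂ : ℝ → ℝ)
    (h₁ : ContDiffOn ℝ 1 η₁ (Icc 0 1)) (h₂ : ContDiffOn ℝ 1 η₂ (Icc 0 1))
    {s : ℝ} (hs : s ∈ Icc (0:ℝ) 1) :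
    ‖derivWithin (fun u => stripMap (η₁ u) (η₂ u)) (Icc 0 1) s‖ /
      (stripMap (η₁ s) (η₂ s)).im =
    Real.sqrt ((Real.cosh (η₂ s)) ^ 2 * (derivWithin η₁ (Icc 0 1) s) ^ 2 +
      (derivWithin η₂ (Icc 0 1) s) ^ 2) := by
  set a := η₁ s with ha
  set b := η₂ s with hb
  set a' := derivWithin η₁ (Icc 0 1) s with ha'
  set b' := derivWithin η₂ (Icc 0 1) s with hb'
  have hud : UniqueDiffWithinAt ℝ (Icc (0:ℝ) 1) s :=
    (uniqueDiffOn_Icc one_pos) s hs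
  have hd₁ : HasDerivWithinAt η₁ a' (Icc 0 1) s :=
    ((h₁.differentiableOn one_ne_zero) s hs).hasDerivWithinAt
  have hd₂ : HasDerivWithinAt η₂ b' (Icc 0 1) s :=
    ((h₂.differentiableOn one_ne_zero) s hs).hasDerivWithinAt
  have hcosh := Real.cosh_pos b
  -- derivative of each real component
  have hexp : HasDerivWithinAt (fun u => Real.exp (η₁ u)) (Real.exp a * a') (Icc 0 1) s :=
    (Real.hasDerivAt_exp a).comp_hasDerivWithinAt s hd₁
  have htanh : HasDerivWithinAt (fun u => Real.tanh (η₂ u))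
      ((Real.cosh b ^ 2)⁻¹ * b') (Icc 0 1) s :=
    (hasDerivAt_tanh b).comp_hasDerivWithinAt s hd₂
  have hsech : HasDerivWithinAt (fun u => (Real.cosh (η₂ u))⁻¹)
      (-(Real.sinh b * b') / Real.cosh b ^ 2) (Icc 0 1) s := by
    have := ((Real.hasDerivAt_cosh b).comp_hasDerivWithinAt s hd₂).inv
      (ne_of_gt hcosh)
    exact this
  -- complex derivative
  set P : ℝ := Real.exp a * a' * Real.tanh b + Real.exp a * ((Real.cosh b ^ 2)⁻¹ * b') with hP
  set Q : ℝ := Real.exp a * a' * (Real.cosh b)⁻¹ +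
      Real.exp a * (-(Real.sinh b * b') / Real.cosh b ^ 2) with hQ
  have hD : HasDerivWithinAt (fun u => stripMap (η₁ u) (η₂ u))
      ((P : ℂ) + (Q : ℂ) * Complex.I) (Icc 0 1) s := by
    have h1 : HasDerivWithinAt (fun u => ((Real.exp (η₁ u) : ℝ) : ℂ))
        ((Real.exp a * a' : ℝ) : ℂ) (Icc 0 1) s := ofReal_comp_within hexp
    have h2 : HasDerivWithinAt (fun u => ((Real.tanh (η₂ u) : ℝ) : ℂ))
        (((Real.cosh b ^ 2)⁻¹ * b' : ℝ) : ℂ) (Icc 0 1) s := ofReal_comp_within htanh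
    have h3 : HasDerivWithinAt (fun u => (((Real.cosh (η₂ u))⁻¹ : ℝ) : ℂ))
        ((-(Real.sinh b * b') / Real.cosh b ^ 2 : ℝ) : ℂ) (Icc 0 1) s :=
      ofReal_comp_within hsech
    have h4 := (h2.add (h3.mul_const Complex.I))
    have h5 := h1.mul h4
    have key : HasDerivWithinAt (fun u => stripMap (η₁ u) (η₂ u))
        (((Real.exp a * a' : ℝ) : ℂ) *
            (((Real.tanh b : ℝ) : ℂ) + (((Real.cosh b)⁻¹ : ℝ) : ℂ) * Complex.I) +
          ((Real.exp a : ℝ) : ℂ) *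
            ((((Real.cosh b ^ 2)⁻¹ * b' : ℝ) : ℂ) +
              ((-(Real.sinh b * b') / Real.cosh b ^ 2 : ℝ) : ℂ) * Complex.I))
        (Icc 0 1) s := by
      simpa [stripMap, ← ha, ← hb, Pi.mul_def, Pi.add_def] using h5
    convert key using 1
    push_cast [hP, hQ]
    ring
  have hder : derivWithin (fun u => stripMap (η₁ u) (η₂ u)) (Icc 0 1) s =
      (P : ℂ) + (Q : ℂ) * Complex.I := hD.derivWithin hud
  have him : (stripMap a b).im = Real.exp a * (Real.cosh b)⁻¹ := by
    simp only [stripMap, Complex.add_im, Complex.add_re, Complex.mul_im, Complex.mul_re,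
      Complex.ofReal_re, Complex.ofReal_im, Complex.I_re, Complex.I_im]
    ring
  have habs : ‖(P : ℂ) + (Q : ℂ) * Complex.I‖ = Real.sqrt (P ^ 2 + Q ^ 2) := by
    rw [Complex.norm_def, Complex.normSq_apply]
    simp [pow_two]
  rw [hder, habs, him]
  -- the algebraic identity
  have hsum : P ^ 2 + Q ^ 2 =
      (Real.exp a * (Real.cosh b)⁻¹) ^ 2 *
        ((Real.cosh b) ^ 2 * a' ^ 2 + b' ^ 2) := by
    have htanh' : Real.tanh b = Real.sinh b / Real.cosh b := Real.tanh_eq_sinh_div_cosh b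
    have hid : Real.cosh b ^ 2 - Real.sinh b ^ 2 = 1 := Real.cosh_sq_sub_sinh_sq b
    rw [hP, hQ, htanh']
    field_simp
    linear_combination
      (-(a' ^ 2 * Real.cosh b ^ 2 + b' ^ 2)) * hid
  rw [hsum, Real.sqrt_mul (sq_nonneg _), Real.sqrt_sq (by positivity)]
  exact mul_div_cancel_left₀ _ (by positivity)

/-- For a C¹ path `η = (η₁,η₂)` in the `(x,t)`-plane, the hyperbolic length of `F ∘ η`
equals `∫ √(cosh²(η₂)·η₁′² + η₂′²)`, and hence lies between `(1/√2)` times and all of the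
ladder length `∫ √(cosh(2η₂)·η₁′² + η₂′²)`: the strip map is `√2`-bi-Lipschitz from the
ladder metric `cosh(2t)dx² + dt²` to the hyperbolic metric of the upper half plane. -/
theorem stripMap_length
    (η₁ η₂ : ℝ → ℝ)
    (h₁ : ContDiffOn ℝ 1 η₁ (Icc 0 1)) (h₂ : ContDiffOn ℝ 1 η₂ (Icc 0 1)) :
    (∫ s in (0 : ℝ)..1,
        ‖derivWithin (fun u => stripMap (η₁ u) (η₂ u)) (Icc 0 1) s‖ /
          (stripMap (η₁ s) (η₂ s)).im) =
      (∫ s in (0 : ℝ)..1,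
        Real.sqrt ((Real.cosh (η₂ s)) ^ 2 * (derivWithin η₁ (Icc 0 1) s) ^ 2 +
          (derivWithin η₂ (Icc 0 1) s) ^ 2)) ∧
    (1 / Real.sqrt 2) *
        (∫ s in (0 : ℝ)..1,
          Real.sqrt (Real.cosh (2 * η₂ s) * (derivWithin η₁ (Icc 0 1) s) ^ 2 +
            (derivWithin η₂ (Icc 0 1) s) ^ 2)) ≤
      (∫ s in (0 : ℝ)..1,
        ‖derivWithin (fun u => stripMap (η₁ u) (η₂ u)) (Icc 0 1) s‖ /
          (stripMap (η₁ s) (η₂ s)).im) ∧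
    (∫ s in (0 : ℝ)..1,
        ‖derivWithin (fun u => stripMap (η₁ u) (η₂ u)) (Icc 0 1) s‖ /
          (stripMap (η₁ s) (η₂ s)).im) ≤
      (∫ s in (0 : ℝ)..1,
        Real.sqrt (Real.cosh (2 * η₂ s) * (derivWithin η₁ (Icc 0 1) s) ^ 2 +
          (derivWithin η₂ (Icc 0 1) s) ^ 2)) := by
  have huIcc : uIcc (0:ℝ) 1 = Icc 0 1 := uIcc_of_le zero_le_one
  have hc₁ : ContinuousOn (derivWithin η₁ (Icc 0 1)) (Icc 0 1) :=
    (h₁.derivWithin (m := 0) (uniqueDiffOn_Icc one_pos) (by norm_num)).continuousOn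
  have hc₂ : ContinuousOn (derivWithin η₂ (Icc 0 1)) (Icc 0 1) :=
    (h₂.derivWithin (m := 0) (uniqueDiffOn_Icc one_pos) (by norm_num)).continuousOn
  have hcont1 : ContinuousOn (fun s => Real.sqrt ((Real.cosh (η₂ s)) ^ 2 *
      (derivWithin η₁ (Icc 0 1) s) ^ 2 + (derivWithin η₂ (Icc 0 1) s) ^ 2)) (Icc 0 1) :=
    ((((Real.continuous_cosh.comp_continuousOn h₂.continuousOn).pow 2).mul
      (hc₁.pow 2)).add (hc₂.pow 2)).sqrt
  have hcont2 : ContinuousOn (fun s => Real.sqrt (Real.cosh (2 * η₂ s) *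
      (derivWithin η₁ (Icc 0 1) s) ^ 2 + (derivWithin η₂ (Icc 0 1) s) ^ 2)) (Icc 0 1) :=
    (((Real.continuous_cosh.comp_continuousOn
      (continuousOn_const.mul h₂.continuousOn)).mul
      (hc₁.pow 2)).add (hc₂.pow 2)).sqrt
  have hint1 : IntervalIntegrable (fun s => Real.sqrt ((Real.cosh (η₂ s)) ^ 2 *
      (derivWithin η₁ (Icc 0 1) s) ^ 2 + (derivWithin η₂ (Icc 0 1) s) ^ 2))
      MeasureTheory.volume 0 1 := ContinuousOn.intervalIntegrable (by rw [huIcc]; exact hcont1)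
  have hint2 : IntervalIntegrable (fun s => Real.sqrt (Real.cosh (2 * η₂ s) *
      (derivWithin η₁ (Icc 0 1) s) ^ 2 + (derivWithin η₂ (Icc 0 1) s) ^ 2))
      MeasureTheory.volume 0 1 := ContinuousOn.intervalIntegrable (by rw [huIcc]; exact hcont2)
  have heq : (∫ s in (0 : ℝ)..1,
        ‖derivWithin (fun u => stripMap (η₁ u) (η₂ u)) (Icc 0 1) s‖ /
          (stripMap (η₁ s) (η₂ s)).im) =
      (∫ s in (0 : ℝ)..1,
        Real.sqrt ((Real.cosh (η₂ s)) ^ 2 * (derivWithin η₁ (Icc 0 1) s) ^ 2 +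
          (derivWithin η₂ (Icc 0 1) s) ^ 2)) :=
    intervalIntegral.integral_congr fun s hs =>
      pointwise_eq η₁ η₂ h₁ h₂ (huIcc ▸ hs)
  refine ⟨heq, ?_, ?_⟩
  · rw [heq, ← intervalIntegral.integral_const_mul]
    apply intervalIntegral.integral_mono_on zero_le_one (hint2.const_mul _) hint1
    intro s hs
    set a' := derivWithin η₁ (Icc 0 1) s
    set b' := derivWithin η₂ (Icc 0 1) s
    set t := η₂ s
    have h2 : Real.sqrt 2 > 0 := Real.sqrt_pos.mpr (by norm_num)
    rw [one_div, ← Real.sqrt_inv, ← Real.sqrt_mul (by norm_num)]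
    apply Real.sqrt_le_sqrt
    have hcosh2 : Real.cosh (2 * t) = Real.cosh t ^ 2 + Real.sinh t ^ 2 :=
      Real.cosh_two_mul t
    have hid : Real.cosh t ^ 2 - Real.sinh t ^ 2 = 1 := Real.cosh_sq_sub_sinh_sq t
    nlinarith [sq_nonneg a', sq_nonneg b']
  · rw [heq]
    apply intervalIntegral.integral_mono_on zero_le_one hint1 hint2
    intro s hs
    apply Real.sqrt_le_sqrt
    have hcosh2 : Real.cosh (2 * η₂ s) = Real.cosh (η₂ s) ^ 2 + Real.sinh (η₂ s) ^ 2 :=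
      Real.cosh_two_mul (η₂ s)
    nlinarith [sq_nonneg (derivWithin η₁ (Icc 0 1) s), sq_nonneg (Real.sinh (η₂ s))]
end
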